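/- arXiv:2009.13995 — 2 statements merged into one kernel-verified Lean document; each statement's English description precedes it below -/
import Mathlib

section
/- Let X_1,...,X_n be real numbers in [0,1] and a,b>0. Then n·∫_0^1 |(1/n)·Σ_{j=1}^n ((a+b)X_j − a)·1{X_j≥t} − t^a(1−t)^b/B(a,b)|² dt = (1/n)·Σ_{j,k=1}^n ((a+b)²X_jX_k − a(a+b)(X_j+X_k) + a²)·min(X_j,X_k) − (2B(a+1,b+1)/B(a,b))·Σ_{j=1}^n ((a+b)X_j − a)·F_{(a+1,b+1)}(X_j) + n·B(2a+1,2b+1)/B(a,b)². -/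
open Finset

noncomputable def betaFun (a b : ℝ) : ℝ := Real.Gamma a * Real.Gamma b / Real.Gamma (a + b)

/-- The Beta(a,b) cumulative distribution function. -/
noncomputable def betaCDF (a b x : ℝ) : ℝ :=
  (∫ s in (0:ℝ)..x, s ^ (a - 1) * (1 - s) ^ (b - 1)) / betaFun a b

lemma betaFun_pos {a b : ℝ} (ha : 0 < a) (hb : 0 < b) : 0 < betaFun a b := by
  unfold betaFun
  have := Real.Gamma_pos_of_pos ha
  have := Real.Gamma_pos_of_pos hb
  have := Real.Gamma_pos_of_pos (add_pos ha hb)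
  positivity

lemma real_betaIntegral {u v : ℝ} (hu : 0 < u) (hv : 0 < v) :
    ∫ x in (0:ℝ)..1, x ^ (u - 1) * (1 - x) ^ (v - 1) = betaFun u v := by
  have h := Complex.Gamma_mul_Gamma_eq_betaIntegral (s := (u : ℂ)) (t := (v : ℂ))
    (by simpa using hu) (by simpa using hv)
  have hint : Complex.betaIntegral (u : ℂ) (v : ℂ)
      = ((∫ x in (0:ℝ)..1, x ^ (u - 1) * (1 - x) ^ (v - 1) : ℝ) : ℂ) := by
    rw [Complex.betaIntegral, ← intervalIntegral.integral_ofReal]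
    apply intervalIntegral.integral_congr
    intro x hx
    rw [Set.uIcc_of_le zero_le_one] at hx
    obtain ⟨hx0, hx1⟩ := hx
    simp only []
    rw [Complex.ofReal_mul, Complex.ofReal_cpow hx0, Complex.ofReal_cpow (by linarith : (0:ℝ) ≤ 1 - x)]
    push_cast
    ring_nf
  rw [hint, Complex.Gamma_ofReal, Complex.Gamma_ofReal, ← Complex.ofReal_add,
    Complex.Gamma_ofReal, ← Complex.ofReal_mul, ← Complex.ofReal_mul,
    Complex.ofReal_inj] at h
  have hΓ : Real.Gamma (u + v) ≠ 0 := (Real.Gamma_pos_of_pos (add_pos hu hv)).ne'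
  unfold betaFun
  rw [h]
  field_simp

lemma indicator_integral {m : ℝ} (h0 : 0 ≤ m) (h1 : m ≤ 1) :
    ∫ t in (0:ℝ)..1, (if t ≤ m then (1:ℝ) else 0) = m := by
  have heq : (fun t : ℝ => if t ≤ m then (1:ℝ) else 0)
      = Set.indicator (Set.Iic m) (fun _ => (1:ℝ)) := by
    funext t
    simp [Set.indicator_apply]
  rw [intervalIntegral.integral_of_le zero_le_one, heq,
    MeasureTheory.setIntegral_indicator measurableSet_Iic]
  have : Set.Ioc (0:ℝ) 1 ∩ Set.Iic m = Set.Ioc 0 m := by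
    ext t
    simp only [Set.mem_inter_iff, Set.mem_Ioc, Set.mem_Iic]
    constructor
    · rintro ⟨⟨h, _⟩, h'⟩; exact ⟨h, h'⟩
    · rintro ⟨h, h'⟩; exact ⟨⟨h, h'.trans h1⟩, h'⟩
  rw [this]
  simp [Real.volume_Ioc, h0]

lemma indicator_integrable (x : ℝ) :
    IntervalIntegrable (fun t : ℝ => if t ≤ x then (1:ℝ) else 0) MeasureTheory.volume 0 1 := by
  apply IntervalIntegrable.mono_fun' (g := fun _ => (1:ℝ)) intervalIntegrable_const
  · apply Measurable.aestronglyMeasurable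
    exact Measurable.ite measurableSet_Iic measurable_const measurable_const
  · filter_upwards with t
    by_cases h : t ≤ x <;> simp [h]

set_option maxHeartbeats 1600000 in
theorem test_statistic_representation (n : ℕ) (hn : 0 < n) (X : Fin n → ℝ)
    (hX : ∀ j, X j ∈ Set.Icc (0:ℝ) 1) (a b : ℝ) (ha : 0 < a) (hb : 0 < b) :
    (n : ℝ) * ∫ t in (0:ℝ)..1,
        |(1 / (n : ℝ)) * ∑ j : Fin n, ((a + b) * X j - a) * (if t ≤ X j then (1:ℝ) else 0)
          - t ^ a * (1 - t) ^ b / betaFun a b| ^ 2 =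
      (1 / (n : ℝ)) * ∑ j : Fin n, ∑ k : Fin n,
          ((a + b) ^ 2 * X j * X k - a * (a + b) * (X j + X k) + a ^ 2) * min (X j) (X k)
        - (2 * betaFun (a + 1) (b + 1) / betaFun a b) *
            ∑ j : Fin n, ((a + b) * X j - a) * betaCDF (a + 1) (b + 1) (X j)
        + (n : ℝ) * betaFun (2 * a + 1) (2 * b + 1) / (betaFun a b) ^ 2 := by
  have hn' : (n : ℝ) ≠ 0 := Nat.cast_ne_zero.mpr hn.ne'
  have hB : (0:ℝ) < betaFun a b := betaFun_pos ha hb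
  have hB1 : (0:ℝ) < betaFun (a+1) (b+1) := betaFun_pos (by linarith) (by linarith)
  set c : Fin n → ℝ := fun j => (a + b) * X j - a with hc
  set g : ℝ → ℝ := fun t => t ^ a * (1 - t) ^ b / betaFun a b with hgdef
  -- continuity of g
  have hrpow : ∀ p : ℝ, 0 < p → Continuous fun t : ℝ => t ^ p := by
    intro p hp
    exact continuous_iff_continuousAt.mpr fun x => Real.continuousAt_rpow_const x p (Or.inr hp.le)
  have hgcont : Continuous g := by
    apply Continuous.div_const
    exact (hrpow a ha).mul ((hrpow b hb).comp (continuous_const.sub continuous_id))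
  have hIg : IntervalIntegrable g MeasureTheory.volume 0 1 := hgcont.intervalIntegrable 0 1
  -- integrability of indicator * g
  have hIjg : ∀ x : ℝ, IntervalIntegrable
      (fun t : ℝ => (if t ≤ x then (1:ℝ) else 0) * g t) MeasureTheory.volume 0 1 := by
    intro x
    apply IntervalIntegrable.mono_fun' (g := fun t => |g t|) hIg.abs
    · exact ((Measurable.ite measurableSet_Iic measurable_const measurable_const).mul
        hgcont.measurable).aestronglyMeasurable
    · filter_upwards with t
      by_cases h : t ≤ x <;> simp [h, abs_nonneg]
  -- product of indicators
  have hprod : ∀ j k : Fin n, (fun t : ℝ => (if t ≤ X j then (1:ℝ) else 0) *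
      (if t ≤ X k then (1:ℝ) else 0)) = fun t => if t ≤ min (X j) (X k) then (1:ℝ) else 0 := by
    intro j k
    funext t
    rcases le_total (X j) (X k) with h | h
    · rw [min_eq_left h]
      by_cases h1 : t ≤ X j
      · simp [h1, h1.trans h]
      · simp [h1]
    · rw [min_eq_right h]
      by_cases h1 : t ≤ X k
      · simp [h1, h1.trans h]
      · simp [h1]
  have hmin : ∀ j k : Fin n, ∫ t in (0:ℝ)..1,
      (if t ≤ X j then (1:ℝ) else 0) * (if t ≤ X k then (1:ℝ) else 0) = min (X j) (X k) := by
    intro j k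
    rw [hprod j k]
    exact indicator_integral (le_min (hX j).1 (hX k).1) (min_le_of_left_le (hX j).2)
  -- cross term integral
  have hcross : ∀ j : Fin n, ∫ t in (0:ℝ)..1, (if t ≤ X j then (1:ℝ) else 0) * g t
      = betaFun (a+1) (b+1) / betaFun a b * betaCDF (a+1) (b+1) (X j) := by
    intro j
    obtain ⟨hx0, hx1⟩ := hX j
    have heq : (fun t : ℝ => (if t ≤ X j then (1:ℝ) else 0) * g t)
        = Set.indicator (Set.Iic (X j)) g := by
      funext t
      by_cases h : t ≤ X j <;> simp [Set.indicator_apply, h]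
    rw [intervalIntegral.integral_of_le zero_le_one, heq,
      MeasureTheory.setIntegral_indicator measurableSet_Iic]
    have hset : Set.Ioc (0:ℝ) 1 ∩ Set.Iic (X j) = Set.Ioc 0 (X j) := by
      ext t
      simp only [Set.mem_inter_iff, Set.mem_Ioc, Set.mem_Iic]
      constructor
      · rintro ⟨⟨h, _⟩, h'⟩; exact ⟨h, h'⟩
      · rintro ⟨h, h'⟩; exact ⟨⟨h, h'.trans hx1⟩, h'⟩
    rw [hset, ← intervalIntegral.integral_of_le hx0]
    have : betaCDF (a+1) (b+1) (X j)
        = (∫ s in (0:ℝ)..(X j), s ^ a * (1 - s) ^ b) / betaFun (a+1) (b+1) := by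
      unfold betaCDF
      norm_num
    rw [this, hgdef]
    rw [intervalIntegral.integral_div]
    field_simp
  -- square of g
  have hg2 : ∫ t in (0:ℝ)..1, g t ^ 2
      = betaFun (2*a+1) (2*b+1) / (betaFun a b) ^ 2 := by
    have heq : ∀ t ∈ Set.uIcc (0:ℝ) 1, g t ^ 2
        = t ^ (2*a+1-1) * (1-t) ^ (2*b+1-1) / (betaFun a b) ^ 2 := by
      intro t ht
      rw [Set.uIcc_of_le zero_le_one] at ht
      obtain ⟨ht0, ht1⟩ := ht
      have h1 : (t ^ a) ^ (2:ℕ) = t ^ (2*a+1-1) := by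
        rw [← Real.rpow_natCast (t ^ a) 2, ← Real.rpow_mul ht0]
        norm_num
        ring_nf
      have h2 : ((1-t) ^ b) ^ (2:ℕ) = (1-t) ^ (2*b+1-1) := by
        rw [← Real.rpow_natCast ((1-t) ^ b) 2, ← Real.rpow_mul (by linarith : (0:ℝ) ≤ 1 - t)]
        norm_num
        ring_nf
      rw [hgdef]
      simp only [div_pow, mul_pow]
      rw [h1, h2]
    rw [intervalIntegral.integral_congr heq, intervalIntegral.integral_div,
      real_betaIntegral (by linarith) (by linarith)]
  -- integrability pieces
  have hint1 : ∀ j k : Fin n, IntervalIntegrable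
      (fun t : ℝ => c j * c k * ((if t ≤ X j then (1:ℝ) else 0) * (if t ≤ X k then (1:ℝ) else 0)))
      MeasureTheory.volume 0 1 := by
    intro j k
    have heq : (fun t : ℝ => c j * c k *
        ((if t ≤ X j then (1:ℝ) else 0) * (if t ≤ X k then (1:ℝ) else 0)))
        = fun t => c j * c k * (if t ≤ min (X j) (X k) then (1:ℝ) else 0) := by
      funext t
      exact congrArg (c j * c k * ·) (congrFun (hprod j k) t)
    rw [heq]
    exact (indicator_integrable (min (X j) (X k))).const_mul _
  have hint2 : ∀ j : Fin n, IntervalIntegrable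
      (fun t : ℝ => c j * ((if t ≤ X j then (1:ℝ) else 0) * g t)) MeasureTheory.volume 0 1 :=
    fun j => (hIjg (X j)).const_mul _
  -- expand the square
  have hexp : ∀ t : ℝ,
      |(1 / (n : ℝ)) * ∑ j : Fin n, c j * (if t ≤ X j then (1:ℝ) else 0) - g t| ^ 2
      = (1/(n:ℝ))^2 * ∑ j : Fin n, ∑ k : Fin n,
          c j * c k * ((if t ≤ X j then (1:ℝ) else 0) * (if t ≤ X k then (1:ℝ) else 0))
        - 2 * (1/(n:ℝ)) * ∑ j : Fin n, c j * ((if t ≤ X j then (1:ℝ) else 0) * g t)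
        + g t ^ 2 := by
    intro t
    rw [sq_abs]
    have hsq : (∑ j : Fin n, c j * (if t ≤ X j then (1:ℝ) else 0)) ^ 2
        = ∑ j : Fin n, ∑ k : Fin n,
          c j * c k * ((if t ≤ X j then (1:ℝ) else 0) * (if t ≤ X k then (1:ℝ) else 0)) := by
      rw [sq, Finset.sum_mul_sum]
      apply Finset.sum_congr rfl
      intro j _
      apply Finset.sum_congr rfl
      intro k _
      ring
    have hcg : (∑ j : Fin n, c j * (if t ≤ X j then (1:ℝ) else 0)) * g t
        = ∑ j : Fin n, c j * ((if t ≤ X j then (1:ℝ) else 0) * g t) := by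
      rw [Finset.sum_mul]
      apply Finset.sum_congr rfl
      intro j _
      ring
    have hcg2 : (1 / (n:ℝ) * ∑ j : Fin n, c j * (if t ≤ X j then (1:ℝ) else 0)) * g t
        = 1/(n:ℝ) * ∑ j : Fin n, c j * ((if t ≤ X j then (1:ℝ) else 0) * g t) := by
      rw [mul_assoc, hcg]
    rw [sub_sq, mul_pow, hsq, mul_assoc 2, hcg2]
    ring
  -- restate goal in terms of c and g
  show (n : ℝ) * ∫ t in (0:ℝ)..1,
        |(1 / (n : ℝ)) * ∑ j : Fin n, c j * (if t ≤ X j then (1:ℝ) else 0) - g t| ^ 2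
      = (1 / (n : ℝ)) * ∑ j : Fin n, ∑ k : Fin n,
          ((a + b) ^ 2 * X j * X k - a * (a + b) * (X j + X k) + a ^ 2) * min (X j) (X k)
        - (2 * betaFun (a + 1) (b + 1) / betaFun a b) *
            ∑ j : Fin n, c j * betaCDF (a + 1) (b + 1) (X j)
        + (n : ℝ) * betaFun (2 * a + 1) (2 * b + 1) / (betaFun a b) ^ 2
  simp only [hexp]
  have key : ∀ f : Fin n → ℝ → ℝ, (∀ j, IntervalIntegrable (f j) MeasureTheory.volume 0 1) →
      IntervalIntegrable (fun t => ∑ j : Fin n, f j t) MeasureTheory.volume 0 1 := by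
    intro f hf
    have h := IntervalIntegrable.sum (μ := MeasureTheory.volume) (a := (0:ℝ)) (b := 1)
      (f := f) Finset.univ (fun j _ => hf j)
    have he : (∑ j : Fin n, f j) = fun t => ∑ j : Fin n, f j t := by
      funext t
      simp [Finset.sum_apply]
    rwa [he] at h
  have hA : IntervalIntegrable (fun t : ℝ => (1/(n:ℝ))^2 * ∑ j : Fin n, ∑ k : Fin n,
      c j * c k * ((if t ≤ X j then (1:ℝ) else 0) * (if t ≤ X k then (1:ℝ) else 0)))
      MeasureTheory.volume 0 1 :=
    (key _ fun j => key _ fun k => hint1 j k).const_mul _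
  have hBint : IntervalIntegrable (fun t : ℝ => 2 * (1/(n:ℝ)) * ∑ j : Fin n,
      c j * ((if t ≤ X j then (1:ℝ) else 0) * g t)) MeasureTheory.volume 0 1 :=
    (key _ fun j => hint2 j).const_mul _
  have hCint : IntervalIntegrable (fun t : ℝ => g t ^ 2) MeasureTheory.volume 0 1 :=
    (hgcont.pow 2).intervalIntegrable 0 1
  rw [intervalIntegral.integral_add (hA.sub hBint) hCint,
    intervalIntegral.integral_sub hA hBint,
    intervalIntegral.integral_const_mul, intervalIntegral.integral_const_mul,
    intervalIntegral.integral_finset_sum (fun j _ => key _ fun k => hint1 j k),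
    intervalIntegral.integral_finset_sum (fun j _ => hint2 j), hg2]
  have e1 : ∑ j : Fin n, ∫ t in (0:ℝ)..1, ∑ k : Fin n,
      c j * c k * ((if t ≤ X j then (1:ℝ) else 0) * (if t ≤ X k then (1:ℝ) else 0))
      = ∑ j : Fin n, ∑ k : Fin n,
        ((a + b) ^ 2 * X j * X k - a * (a + b) * (X j + X k) + a ^ 2) * min (X j) (X k) := by
    apply Finset.sum_congr rfl
    intro j _
    rw [intervalIntegral.integral_finset_sum (fun k _ => hint1 j k)]
    apply Finset.sum_congr rfl
    intro k _
    rw [intervalIntegral.integral_const_mul, hmin j k]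
    simp only [hc]
    ring
  have e2 : ∑ j : Fin n, ∫ t in (0:ℝ)..1, c j * ((if t ≤ X j then (1:ℝ) else 0) * g t)
      = betaFun (a+1) (b+1) / betaFun a b *
        ∑ j : Fin n, c j * betaCDF (a + 1) (b + 1) (X j) := by
    rw [Finset.mul_sum]
    apply Finset.sum_congr rfl
    intro j _
    rw [intervalIntegral.integral_const_mul, hcross j]
    ring
  rw [e1, e2]
  field_simp
end

section
/- The trigamma function satisfies Ψ₁(α)Ψ₁(β) > (Ψ₁(α)+Ψ₁(β))·Ψ₁(α+β) for all α,β>0. -/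
/-- The trigamma function Ψ₁(x) = ∑_{k≥0} 1/(x+k)². -/
noncomputable def trigamma (x : ℝ) : ℝ := ∑' k : ℕ, 1 / (x + k) ^ 2

open Filter Topology

namespace TrigammaAux

lemma summable_sq {x : ℝ} (hx : 0 < x) : Summable (fun k : ℕ => 1 / (x + k) ^ 2) := by
  have hmin : 0 < min x 1 := lt_min hx one_pos
  have hbase : Summable (fun k : ℕ => 1 / ((k : ℝ) + 1) ^ 2) := by
    have h := (summable_nat_add_iff (f := fun n : ℕ => 1 / (n : ℝ) ^ 2) 1).2
      (Real.summable_one_div_nat_pow.2 one_lt_two)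
    refine h.congr fun k => ?_
    push_cast
    ring
  refine Summable.of_nonneg_of_le (fun k => by positivity) (fun k => ?_)
    (hbase.mul_left (1 / (min x 1) ^ 2))
  have hk : (0:ℝ) ≤ (k : ℝ) := Nat.cast_nonneg k
  have h2 : min x 1 ≤ x := min_le_left _ _
  have h3 : min x 1 ≤ 1 := min_le_right _ _
  have h1 : min x 1 * ((k:ℝ) + 1) ≤ x + k := by nlinarith
  calc 1 / (x + k) ^ 2 ≤ 1 / (min x 1 * ((k:ℝ) + 1)) ^ 2 := by
        apply one_div_le_one_div_of_le (by positivity)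
        have := pow_le_pow_left₀ (by positivity : (0:ℝ) ≤ min x 1 * ((k:ℝ)+1)) h1 2
        exact this
    _ = 1 / (min x 1) ^ 2 * (1 / ((k:ℝ) + 1) ^ 2) := by
        rw [mul_pow, one_div_mul_one_div]

lemma summable_cube {x : ℝ} (hx : 0 < x) : Summable (fun k : ℕ => 2 / (x + k) ^ 3) := by
  refine Summable.of_nonneg_of_le (fun k => by positivity) (fun k => ?_)
    ((summable_sq hx).mul_left (2 / x))
  have hk : (0:ℝ) < x + k := by positivity
  have : 2 / (x + k) ^ 3 = (2 / (x + k)) * (1 / (x + k) ^ 2) := by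
    field_simp
  rw [this]
  apply mul_le_mul_of_nonneg_right _ (by positivity)
  apply div_le_div_of_nonneg_left (by norm_num) hx (by linarith)

lemma hasSum_telescope {g : ℕ → ℝ} (hmono : ∀ n, g (n + 1) ≤ g n)
    (hlim : Tendsto g atTop (𝓝 0)) : HasSum (fun n => g n - g (n + 1)) (g 0) := by
  rw [hasSum_iff_tendsto_nat_of_nonneg (fun i => sub_nonneg.2 (hmono i))]
  have h : ∀ n, ∑ i ∈ Finset.range n, (g i - g (i+1)) = g 0 - g n :=
    fun n => Finset.sum_range_sub' g n
  simp only [h]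
  simpa using tendsto_const_nhds.sub hlim

lemma tendsto_inv_shift (y : ℝ) : Tendsto (fun n : ℕ => 1 / (y + n)) atTop (𝓝 0) := by
  have h : Tendsto (fun n : ℕ => y + (n:ℝ)) atTop atTop :=
    tendsto_atTop_add_const_left atTop y tendsto_natCast_atTop_atTop
  simpa [one_div, Pi.inv_def] using h.inv_tendsto_atTop

lemma hasSum_tele1 (y : ℝ) (hy : 0 < y) :
    HasSum (fun j : ℕ => 1 / (y + j) - 1 / (y + j + 1)) (1 / y) := by
  have h0 : ∀ n : ℕ, (0:ℝ) < y + n := fun n => by positivity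
  have h := hasSum_telescope (g := fun n : ℕ => 1 / (y + n))
    (fun n => by
      apply one_div_le_one_div_of_le (h0 n)
      push_cast; linarith)
    (tendsto_inv_shift y)
  simp only [Nat.cast_add, Nat.cast_one, Nat.cast_zero, add_zero, ← add_assoc] at h
  exact h

lemma hasSum_tele2 (y : ℝ) (hy : 0 < y) :
    HasSum (fun j : ℕ => 1 / (y + j) ^ 2 - 1 / (y + j + 1) ^ 2) (1 / y ^ 2) := by
  have h0 : ∀ n : ℕ, (0:ℝ) < y + n := fun n => by positivity
  have hlim : Tendsto (fun n : ℕ => 1 / (y + n) ^ 2) atTop (𝓝 0) := by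
    have := (tendsto_inv_shift y).mul (tendsto_inv_shift y)
    rw [mul_zero] at this
    exact this.congr fun n => by rw [one_div_mul_one_div, ← sq]
  have h := hasSum_telescope (g := fun n : ℕ => 1 / (y + n) ^ 2)
    (fun n => by
      apply one_div_le_one_div_of_le (by positivity)
      have : y + (n:ℝ) ≤ y + ((n:ℕ)+1 : ℕ) := by push_cast; linarith
      exact pow_le_pow_left₀ (h0 n).le this 2)
    hlim
  simp only [Nat.cast_add, Nat.cast_one, Nat.cast_zero, add_zero, ← add_assoc] at h
  exact h

lemma tsum_shift_sq_le (y : ℝ) (hy : 0 < y) : ∑' j : ℕ, 1 / (y + j + 1) ^ 2 ≤ 1 / y := by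
  have ht := hasSum_tele1 y hy
  rw [← ht.tsum_eq]
  refine Summable.tsum_le_tsum (fun j => ?_) ?_ ht.summable
  · have h0 : (0:ℝ) < y + j := by positivity
    have h1 : (0:ℝ) < y + j + 1 := by linarith
    rw [div_sub_div _ _ (ne_of_gt h0) (ne_of_gt h1)]
    rw [div_le_div_iff₀ (by positivity) (by positivity)]
    nlinarith
  · refine (summable_sq (x := y + 1) (by linarith)).congr fun k => ?_
    ring_nf

lemma one_div_sq_lt_tsum_cube (y : ℝ) (hy : 0 < y) :
    1 / y ^ 2 < ∑' n : ℕ, 2 / (y + n) ^ 3 := by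
  have ht := hasSum_tele2 y hy
  rw [← ht.tsum_eq]
  have key : ∀ n : ℕ, 1 / (y + n) ^ 2 - 1 / (y + n + 1) ^ 2 < 2 / (y + n) ^ 3 := by
    intro n
    have h0 : (0:ℝ) < y + n := by positivity
    rw [div_sub_div _ _ (by positivity) (by positivity),
      div_lt_div_iff₀ (by positivity) (by positivity)]
    nlinarith [h0, sq_nonneg ((y:ℝ) + n)]
  exact Summable.tsum_lt_tsum (i := 0) (fun n => (key n).le) (key 0) ht.summable (summable_cube hy)

end TrigammaAux

namespace TrigammaAux

lemma summable_prod_mul {f g : ℕ → ℝ} (hf : Summable f) (hg : Summable g)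
    (hf0 : ∀ k, 0 ≤ f k) (hg0 : ∀ k, 0 ≤ g k) :
    Summable (fun p : ℕ × ℕ => f p.1 * g p.2) :=
  Summable.mul_of_nonneg hf hg (Pi.le_def.2 hf0) (Pi.le_def.2 hg0)

lemma trig_mul {x y : ℝ} (hx : 0 < x) (hy : 0 < y) :
    trigamma x * trigamma y = ∑' p : ℕ × ℕ, 1 / (x + p.1) ^ 2 * (1 / (y + p.2) ^ 2) := by
  have hprod := summable_prod_mul (summable_sq hx) (summable_sq hy)
      (fun k => by positivity) (fun k => by positivity)
  exact Summable.tsum_mul_tsum (summable_sq hx) (summable_sq hy) hprod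

def ι₁ : ℕ × ℕ → ℕ × ℕ := fun p => (p.1, p.1 + p.2)
def ι₂ : ℕ × ℕ → ℕ × ℕ := fun p => (p.1 + p.2 + 1, p.1)

lemma inj₁ : Function.Injective ι₁ := by
  rintro ⟨a, b⟩ ⟨c, d⟩ h
  simp only [ι₁, Prod.mk.injEq] at h
  exact Prod.ext h.1 (by omega)

lemma inj₂ : Function.Injective ι₂ := by
  rintro ⟨a, b⟩ ⟨c, d⟩ h
  simp only [ι₂, Prod.mk.injEq] at h
  exact Prod.ext h.2 (by omega)

lemma range₂ : Set.range ι₂ = (Set.range ι₁)ᶜ := by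
  ext ⟨m, k⟩
  simp only [Set.mem_range, Set.mem_compl_iff, ι₁, ι₂, Prod.mk.injEq, Prod.exists, not_exists,
    not_and]
  constructor
  · rintro ⟨a, b, h1, h2⟩ c d hc hd
    omega
  · intro h
    have hk : k < m := by
      by_contra hc
      push_neg at hc
      exact h m (k - m) rfl (by omega)
    exact ⟨k, m - k - 1, by omega, rfl⟩

lemma split {x y : ℝ} (hx : 0 < x) (hy : 0 < y) :
    trigamma x * trigamma (x + y) =
      (∑' p : ℕ × ℕ, 1 / (x + p.1) ^ 2 * (1 / (x + y + (p.1 + p.2 : ℕ)) ^ 2)) +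
      ∑' p : ℕ × ℕ, 1 / (x + (p.1 + p.2 + 1 : ℕ)) ^ 2 * (1 / (x + y + p.1) ^ 2) := by
  have hxy : 0 < x + y := by linarith
  have hF := summable_prod_mul (summable_sq hx) (summable_sq hxy)
      (fun k => by positivity) (fun k => by positivity)
  rw [trig_mul hx hxy,
    ← Summable.tsum_subtype_add_tsum_subtype_compl hF (Set.range ι₁)]
  congr 1
  · rw [tsum_range (fun p : ℕ × ℕ => 1 / (x + p.1) ^ 2 * (1 / (x + y + p.2) ^ 2)) inj₁]
    exact tsum_congr fun p => rfl
  · rw [← range₂, tsum_range (fun p : ℕ × ℕ => 1 / (x + p.1) ^ 2 * (1 / (x + y + p.2) ^ 2)) inj₂]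
    exact tsum_congr fun p => rfl

end TrigammaAux

namespace TrigammaAux

lemma summable_P {x y : ℝ} (hx : 0 < x) (hy : 0 < y) :
    Summable (fun p : ℕ × ℕ => 2 / ((x + y + (p.1 + p.2 : ℕ)) ^ 3 * (x + p.1))) := by
  have hxy : 0 < x + y := by linarith
  have hcomp2 := (summable_prod_mul (summable_sq hx) (summable_sq hxy)
    (fun k => by positivity) (fun k => by positivity)).mul_left 2
  refine Summable.of_nonneg_of_le (fun p => by positivity) (fun p => ?_) hcomp2
  obtain ⟨m, n⟩ := p
  simp only
  have ha : (0:ℝ) < x + m := by positivity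
  have hc : (0:ℝ) < x + y + n := by positivity
  have ht : (0:ℝ) < x + y + ((m + n : ℕ) : ℝ) := by positivity
  have h1 : x + y + (n:ℝ) ≤ x + y + ((m + n : ℕ) : ℝ) := by
    push_cast; have : (0:ℝ) ≤ m := Nat.cast_nonneg m; linarith
  have h2 : x + (m:ℝ) ≤ x + y + ((m + n : ℕ) : ℝ) := by
    push_cast; have : (0:ℝ) ≤ n := Nat.cast_nonneg n; linarith
  have hkey : (x + m) ^ 2 * (x + y + (n:ℝ)) ^ 2 ≤ (x + y + ((m + n : ℕ):ℝ)) ^ 3 * (x + m) := by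
    have hc2 : (x + y + (n:ℝ)) ^ 2 ≤ (x + y + ((m + n : ℕ):ℝ)) ^ 2 :=
      pow_le_pow_left₀ hc.le h1 2
    have hstep : (x + (m:ℝ)) * (x + y + (n:ℝ)) ^ 2 ≤ (x + y + ((m + n : ℕ):ℝ)) ^ 3 := by
      calc (x + (m:ℝ)) * (x + y + (n:ℝ)) ^ 2
          ≤ (x + y + ((m + n : ℕ):ℝ)) * (x + y + ((m + n : ℕ):ℝ)) ^ 2 :=
            mul_le_mul h2 hc2 (by positivity) ht.le
        _ = (x + y + ((m + n : ℕ):ℝ)) ^ 3 := by ring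
    calc (x + (m:ℝ)) ^ 2 * (x + y + (n:ℝ)) ^ 2
        = (x + (m:ℝ)) * ((x + (m:ℝ)) * (x + y + (n:ℝ)) ^ 2) := by ring
      _ ≤ (x + (m:ℝ)) * (x + y + ((m + n : ℕ):ℝ)) ^ 3 :=
          mul_le_mul_of_nonneg_left hstep ha.le
      _ = (x + y + ((m + n : ℕ):ℝ)) ^ 3 * (x + (m:ℝ)) := by ring
  have hrhs : 2 * (1 / (x + (m:ℝ)) ^ 2 * (1 / (x + y + (n:ℝ)) ^ 2)) =
      2 / ((x + m) ^ 2 * (x + y + (n:ℝ)) ^ 2) := by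
    rw [one_div_mul_one_div, mul_one_div]
  rw [hrhs]
  apply div_le_div_of_nonneg_left (by norm_num) (by positivity) _
  exact hkey

lemma key {x y : ℝ} (hx : 0 < x) (hy : 0 < y) :
    (∑' p : ℕ × ℕ, 1 / (x + (p.1 + p.2 + 1 : ℕ)) ^ 2 * (1 / (x + y + p.1) ^ 2)) <
      ∑' p : ℕ × ℕ, 2 / ((x + y + (p.1 + p.2 : ℕ)) ^ 3 * (x + p.1)) := by
  have hxy : 0 < x + y := by linarith
  -- Summability of the N-term
  have hcomp := summable_prod_mul (summable_sq hxy) (summable_sq (by linarith : (0:ℝ) < x + 1))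
    (fun k => by positivity) (fun k => by positivity)
  have hN : Summable (fun p : ℕ × ℕ =>
      1 / (x + (p.1 + p.2 + 1 : ℕ)) ^ 2 * (1 / (x + y + p.1) ^ 2)) := by
    refine Summable.of_nonneg_of_le (fun p => by positivity) (fun p => ?_) hcomp
    rw [mul_comm]
    refine mul_le_mul_of_nonneg_left ?_ (by positivity)
    apply one_div_le_one_div_of_le (by positivity)
    have h1 : (x + 1) + (p.2:ℝ) ≤ x + ((p.1 + p.2 + 1 : ℕ) : ℝ) := by
      push_cast
      have : (0:ℝ) ≤ p.1 := Nat.cast_nonneg p.1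
      linarith
    exact pow_le_pow_left₀ (by positivity) h1 2
  have hP : Summable (fun p : ℕ × ℕ => 2 / ((x + y + (p.1 + p.2 : ℕ)) ^ 3 * (x + p.1))) :=
    summable_P hx hy
  -- reduce N to iterated sum and bound by X
  have e1 : (∑' p : ℕ × ℕ, 1 / (x + (p.1 + p.2 + 1 : ℕ)) ^ 2 * (1 / (x + y + p.1) ^ 2)) =
      ∑' k : ℕ, ∑' j : ℕ, 1 / (x + (k + j + 1 : ℕ)) ^ 2 * (1 / (x + y + k) ^ 2) := Summable.tsum_prod hN
  have e2 : ∀ k : ℕ, (∑' j : ℕ, 1 / (x + (k + j + 1 : ℕ)) ^ 2 * (1 / (x + y + k) ^ 2)) =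
      (∑' j : ℕ, 1 / ((x + k) + j + 1) ^ 2) * (1 / (x + y + k) ^ 2) := by
    intro k
    rw [tsum_mul_right]
    congr 1
    exact tsum_congr fun j => by push_cast; ring_nf
  have hXsum : Summable (fun k : ℕ => 1 / (x + k) * (1 / (x + y + k) ^ 2)) := by
    refine Summable.of_nonneg_of_le (fun k => by positivity) (fun k => ?_)
      ((summable_sq hxy).mul_left (1 / x))
    have : (0:ℝ) ≤ (k:ℝ) := Nat.cast_nonneg k
    exact mul_le_mul_of_nonneg_right
      (one_div_le_one_div_of_le hx (by linarith)) (by positivity)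
  have hNX : (∑' p : ℕ × ℕ, 1 / (x + (p.1 + p.2 + 1 : ℕ)) ^ 2 * (1 / (x + y + p.1) ^ 2)) ≤
      ∑' k : ℕ, 1 / (x + k) * (1 / (x + y + k) ^ 2) := by
    rw [e1]
    have hterm : ∀ k : ℕ, (∑' j : ℕ, 1 / (x + (k + j + 1 : ℕ)) ^ 2 * (1 / (x + y + k) ^ 2)) ≤
        1 / (x + k) * (1 / (x + y + k) ^ 2) := by
      intro k
      rw [e2 k]
      exact mul_le_mul_of_nonneg_right (tsum_shift_sq_le (x + k) (by positivity)) (by positivity)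
    refine Summable.tsum_le_tsum hterm ?_ hXsum
    exact Summable.of_nonneg_of_le
      (fun k => tsum_nonneg fun j => by positivity) hterm hXsum
  -- reduce P to iterated sum and bound X strictly from above
  have eP : (∑' p : ℕ × ℕ, 2 / ((x + y + (p.1 + p.2 : ℕ)) ^ 3 * (x + p.1))) =
      ∑' m : ℕ, ∑' n : ℕ, 2 / ((x + y + (m + n : ℕ)) ^ 3 * (x + m)) := Summable.tsum_prod hP
  have e4 : ∀ m : ℕ, (∑' n : ℕ, 2 / ((x + y + (m + n : ℕ)) ^ 3 * (x + m))) =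
      (1 / (x + m)) * ∑' n : ℕ, 2 / ((x + y + m) + n) ^ 3 := by
    intro m
    rw [← tsum_mul_left]
    refine tsum_congr fun n => ?_
    have h1 : (x + (m:ℝ)) ≠ 0 := by positivity
    have h2 : ((x + y + (m:ℝ)) + n) ≠ 0 := by positivity
    push_cast
    rw [div_mul_div_comm, one_mul, mul_comm]
    ring_nf
  have e5 : ∀ m : ℕ, 1 / (x + m) * (1 / (x + y + m) ^ 2) <
      (1 / (x + m)) * ∑' n : ℕ, 2 / ((x + y + m) + n) ^ 3 := by
    intro m
    have h := one_div_sq_lt_tsum_cube (x + y + m) (by positivity)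
    exact mul_lt_mul_of_pos_left h (by positivity)
  have hXP : (∑' k : ℕ, 1 / (x + k) * (1 / (x + y + k) ^ 2)) <
      ∑' p : ℕ × ℕ, 2 / ((x + y + (p.1 + p.2 : ℕ)) ^ 3 * (x + p.1)) := by
    rw [eP]
    refine Summable.tsum_lt_tsum (i := 0) (fun m => ?_) ?_ hXsum ?_
    · rw [e4 m]; exact (e5 m).le
    · rw [e4 0]; exact e5 0
    · exact hP.prod
  exact lt_of_le_of_lt hNX hXP

end TrigammaAux

namespace TrigammaAux

lemma tsum_swap (f : ℕ × ℕ → ℝ) : ∑' p : ℕ × ℕ, f p = ∑' p : ℕ × ℕ, f (p.2, p.1) :=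
  ((Equiv.prodComm ℕ ℕ).tsum_eq f).symm

end TrigammaAux

set_option maxHeartbeats 1000000 in
open TrigammaAux in
theorem trigamma_superadditive_inequality (α β : ℝ) (hα : 0 < α) (hβ : 0 < β) :
    (trigamma α + trigamma β) * trigamma (α + β) < trigamma α * trigamma β := by
  have hs : 0 < α + β := by linarith
  have hab : β + α = α + β := add_comm β α
  have hsplit1 := split hα hβ
  have hsplit2 := split hβ hα
  rw [hab] at hsplit2
  have hkey1 := key hα hβ
  have hkey2 := key hβ hα
  rw [hab] at hkey2
  -- summability of the four pieces
  have hcomp1 := summable_prod_mul (summable_sq hα) (summable_sq hs)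
    (fun k => by positivity) (fun k => by positivity)
  have hU1sum : Summable (fun p : ℕ × ℕ =>
      1 / (α + p.1) ^ 2 * (1 / (α + β + (p.1 + p.2 : ℕ)) ^ 2)) := by
    refine Summable.of_nonneg_of_le (fun p => by positivity) (fun p => ?_) hcomp1
    refine mul_le_mul_of_nonneg_left ?_ (by positivity)
    apply one_div_le_one_div_of_le (by positivity)
    have h0 : (0:ℝ) ≤ p.1 := Nat.cast_nonneg p.1
    have h1 : α + β + (p.2:ℝ) ≤ α + β + ((p.1 + p.2 : ℕ) : ℝ) := by push_cast; linarith
    exact pow_le_pow_left₀ (by positivity) h1 2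
  have hcomp2 := summable_prod_mul (summable_sq hs) (summable_sq hβ)
    (fun k => by positivity) (fun k => by positivity)
  have hU2sum : Summable (fun p : ℕ × ℕ =>
      1 / (β + p.2) ^ 2 * (1 / (α + β + (p.1 + p.2 : ℕ)) ^ 2)) := by
    refine Summable.of_nonneg_of_le (fun p => by positivity) (fun p => ?_) hcomp2
    rw [mul_comm]
    refine mul_le_mul_of_nonneg_right ?_ (by positivity)
    apply one_div_le_one_div_of_le (by positivity)
    have h0 : (0:ℝ) ≤ p.2 := Nat.cast_nonneg p.2
    have h1 : α + β + (p.1:ℝ) ≤ α + β + ((p.1 + p.2 : ℕ) : ℝ) := by push_cast; linarith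
    exact pow_le_pow_left₀ (by positivity) h1 2
  have hU3sum : Summable (fun p : ℕ × ℕ =>
      2 / ((α + β + (p.1 + p.2 : ℕ)) ^ 3 * (α + p.1))) := summable_P hα hβ
  have hU4sum : Summable (fun p : ℕ × ℕ =>
      2 / ((α + β + (p.1 + p.2 : ℕ)) ^ 3 * (β + p.2))) := by
    apply (Equiv.prodComm ℕ ℕ).summable_iff.mp
    have h := summable_P hβ hα
    rw [hab] at h
    refine h.congr fun p => ?_
    simp only [Function.comp_apply, Equiv.prodComm_apply, Prod.fst_swap, Prod.snd_swap]
    rw [Nat.add_comm p.2 p.1]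
  -- swap identities
  have e2' : (∑' p : ℕ × ℕ, 1 / (β + p.2) ^ 2 * (1 / (α + β + (p.1 + p.2 : ℕ)) ^ 2)) =
      ∑' p : ℕ × ℕ, 1 / (β + p.1) ^ 2 * (1 / (α + β + (p.1 + p.2 : ℕ)) ^ 2) := by
    rw [tsum_swap (fun p : ℕ × ℕ => 1 / (β + p.2) ^ 2 * (1 / (α + β + (p.1 + p.2 : ℕ)) ^ 2))]
    exact tsum_congr fun p => by simp only; rw [Nat.add_comm p.2 p.1]
  have e4' : (∑' p : ℕ × ℕ, 2 / ((α + β + (p.1 + p.2 : ℕ)) ^ 3 * (β + p.2))) =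
      ∑' p : ℕ × ℕ, 2 / ((α + β + (p.1 + p.2 : ℕ)) ^ 3 * (β + p.1)) := by
    rw [tsum_swap (fun p : ℕ × ℕ => 2 / ((α + β + (p.1 + p.2 : ℕ)) ^ 3 * (β + p.2)))]
    exact tsum_congr fun p => by simp only; rw [Nat.add_comm p.2 p.1]
  -- the decomposition of the product
  have hpt : ∀ p : ℕ × ℕ, 1 / (α + p.1) ^ 2 * (1 / (β + p.2) ^ 2) =
      1 / (α + p.1) ^ 2 * (1 / (α + β + (p.1 + p.2 : ℕ)) ^ 2) +
      1 / (β + p.2) ^ 2 * (1 / (α + β + (p.1 + p.2 : ℕ)) ^ 2) +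
      2 / ((α + β + (p.1 + p.2 : ℕ)) ^ 3 * (α + p.1)) +
      2 / ((α + β + (p.1 + p.2 : ℕ)) ^ 3 * (β + p.2)) := by
    intro p
    have ha : (0:ℝ) < α + p.1 := by positivity
    have hb : (0:ℝ) < β + p.2 := by positivity
    have hc : α + β + ((p.1 + p.2 : ℕ) : ℝ) = (α + p.1) + (β + p.2) := by push_cast; ring
    rw [hc]
    field_simp
    ring
  have add3 : (∑' p : ℕ × ℕ, (1 / (α + p.1) ^ 2 * (1 / (α + β + (p.1 + p.2 : ℕ)) ^ 2) +
      1 / (β + p.2) ^ 2 * (1 / (α + β + (p.1 + p.2 : ℕ)) ^ 2) +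
      2 / ((α + β + (p.1 + p.2 : ℕ)) ^ 3 * (α + p.1)) +
      2 / ((α + β + (p.1 + p.2 : ℕ)) ^ 3 * (β + p.2)))) =
      (∑' p : ℕ × ℕ, (1 / (α + p.1) ^ 2 * (1 / (α + β + (p.1 + p.2 : ℕ)) ^ 2) +
      1 / (β + p.2) ^ 2 * (1 / (α + β + (p.1 + p.2 : ℕ)) ^ 2) +
      2 / ((α + β + (p.1 + p.2 : ℕ)) ^ 3 * (α + p.1)))) +
      ∑' p : ℕ × ℕ, 2 / ((α + β + (p.1 + p.2 : ℕ)) ^ 3 * (β + p.2)) :=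
    Summable.tsum_add ((hU1sum.add hU2sum).add hU3sum) hU4sum
  have add2 : (∑' p : ℕ × ℕ, (1 / (α + p.1) ^ 2 * (1 / (α + β + (p.1 + p.2 : ℕ)) ^ 2) +
      1 / (β + p.2) ^ 2 * (1 / (α + β + (p.1 + p.2 : ℕ)) ^ 2) +
      2 / ((α + β + (p.1 + p.2 : ℕ)) ^ 3 * (α + p.1)))) =
      (∑' p : ℕ × ℕ, (1 / (α + p.1) ^ 2 * (1 / (α + β + (p.1 + p.2 : ℕ)) ^ 2) +
      1 / (β + p.2) ^ 2 * (1 / (α + β + (p.1 + p.2 : ℕ)) ^ 2))) +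
      ∑' p : ℕ × ℕ, 2 / ((α + β + (p.1 + p.2 : ℕ)) ^ 3 * (α + p.1)) :=
    Summable.tsum_add (hU1sum.add hU2sum) hU3sum
  have add1 : (∑' p : ℕ × ℕ, (1 / (α + p.1) ^ 2 * (1 / (α + β + (p.1 + p.2 : ℕ)) ^ 2) +
      1 / (β + p.2) ^ 2 * (1 / (α + β + (p.1 + p.2 : ℕ)) ^ 2))) =
      (∑' p : ℕ × ℕ, 1 / (α + p.1) ^ 2 * (1 / (α + β + (p.1 + p.2 : ℕ)) ^ 2)) +
      ∑' p : ℕ × ℕ, 1 / (β + p.2) ^ 2 * (1 / (α + β + (p.1 + p.2 : ℕ)) ^ 2) :=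
    Summable.tsum_add hU1sum hU2sum
  have hdecomp : trigamma α * trigamma β =
      (∑' p : ℕ × ℕ, 1 / (α + p.1) ^ 2 * (1 / (α + β + (p.1 + p.2 : ℕ)) ^ 2)) +
      (∑' p : ℕ × ℕ, 1 / (β + p.1) ^ 2 * (1 / (α + β + (p.1 + p.2 : ℕ)) ^ 2)) +
      (∑' p : ℕ × ℕ, 2 / ((α + β + (p.1 + p.2 : ℕ)) ^ 3 * (α + p.1))) +
      ∑' p : ℕ × ℕ, 2 / ((α + β + (p.1 + p.2 : ℕ)) ^ 3 * (β + p.1)) := by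
    rw [trig_mul hα hβ, tsum_congr hpt, add3, add2, add1, e2', e4']
  linarith [hsplit1, hsplit2, hkey1, hkey2, hdecomp]
end
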